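/- arXiv:2406.14292 — 2 statements merged into one kernel-verified Lean document; each statement's English description precedes it below -/
import Mathlib

section
/- Let g be convex and suppose prox_g^λ(y₀) = y₁. Then for every a ∈ ℝ^d, ‖y₁ − a‖² ≤ ‖y₀ − a‖² − 2λ(g(y₀) − g(a)) + λ²‖∇⁰g(y₀)‖², where ∇⁰g(y₀) is the least-norm element of the subdifferential ∂g(y₀). -/
private lemma aux_lin (c m : ℝ) (h : ∀ t : ℝ, 0 < t → t ≤ 1 → 0 ≤ c + t * m) : 0 ≤ c := by
  by_contra hc
  push_neg at hc
  rcases le_or_gt m 0 with hm | hm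
  · have := h 1 one_pos le_rfl
    nlinarith
  · have ht : (0:ℝ) < min 1 (-c / (2 * m)) := by
      apply lt_min one_pos
      exact div_pos (by linarith) (by linarith)
    have := h (min 1 (-c / (2 * m))) ht (min_le_left _ _)
    have h2 : min 1 (-c / (2 * m)) ≤ -c / (2 * m) := min_le_right _ _
    have : min 1 (-c / (2 * m)) * m ≤ (-c / (2 * m)) * m :=
      mul_le_mul_of_nonneg_right h2 hm.le
    have hmm : (-c / (2 * m)) * m = -c / 2 := by field_simp
    nlinarith

/-- One-step proximal inequality: if y₁ = prox_g^λ(y₀) and s is the least-norm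
subgradient of g at y₀, then for every a,
‖y₁ − a‖² ≤ ‖y₀ − a‖² − 2λ(g(y₀) − g(a)) + λ²‖s‖². -/
theorem stmt_9 (d : ℕ) (g : EuclideanSpace ℝ (Fin d) → ℝ) (lam : ℝ) (hlam : 0 < lam)
    (hconv : ConvexOn ℝ Set.univ g) (hlsc : LowerSemicontinuous g)
    (y₀ y₁ : EuclideanSpace ℝ (Fin d))
    (hprox : ∀ z : EuclideanSpace ℝ (Fin d),
      g y₁ + ‖y₁ - y₀‖ ^ 2 / (2 * lam) ≤ g z + ‖z - y₀‖ ^ 2 / (2 * lam))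
    (s : EuclideanSpace ℝ (Fin d))
    (hs : ∀ y : EuclideanSpace ℝ (Fin d), g y₀ + (inner ℝ s (y - y₀) : ℝ) ≤ g y)
    (hsmin : ∀ t : EuclideanSpace ℝ (Fin d),
      (∀ y : EuclideanSpace ℝ (Fin d), g y₀ + (inner ℝ t (y - y₀) : ℝ) ≤ g y) →
        ‖s‖ ≤ ‖t‖) :
    ∀ a : EuclideanSpace ℝ (Fin d),
      ‖y₁ - a‖ ^ 2 ≤ ‖y₀ - a‖ ^ 2 - 2 * lam * (g y₀ - g a) + lam ^ 2 * ‖s‖ ^ 2 := by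
  intro a
  set u : EuclideanSpace ℝ (Fin d) := y₁ - y₀ with hu
  set v : EuclideanSpace ℝ (Fin d) := a - y₀ with hv
  -- (1) key subgradient-type inequality at y₁ from prox optimality + convexity
  have key1 : 0 ≤ lam * (g a - g y₁) + ((inner ℝ u v : ℝ) - ‖u‖ ^ 2) := by
    apply aux_lin _ (‖a - y₁‖ ^ 2 / 2)
    intro t ht ht1
    have hz := hprox (y₁ + t • (a - y₁))
    have hzeq : y₁ + t • (a - y₁) = (1 - t) • y₁ + t • a := by
      simp [smul_sub, sub_smul]
      abel
    have hcv : g ((1 - t) • y₁ + t • a) ≤ (1 - t) * g y₁ + t * g a :=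
      hconv.2 (Set.mem_univ y₁) (Set.mem_univ a) (by linarith) ht.le (by ring)
    rw [hzeq] at hz
    have hnorm : ‖(1 - t) • y₁ + t • a - y₀‖ ^ 2
        = ‖u‖ ^ 2 + 2 * (t * (inner ℝ u (a - y₁) : ℝ)) + t ^ 2 * ‖a - y₁‖ ^ 2 := by
      have h1 : (1 - t) • y₁ + t • a - y₀ = u + t • (a - y₁) := by
        rw [← hzeq, hu]; abel
      rw [h1, norm_add_sq_real, real_inner_smul_right, norm_smul]
      rw [Real.norm_eq_abs, abs_of_pos ht]
      ring
    rw [hnorm] at hz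
    have hiv : (inner ℝ u (a - y₁) : ℝ) = (inner ℝ u v : ℝ) - ‖u‖ ^ 2 := by
      have : a - y₁ = v - u := by rw [hu, hv]; abel
      rw [this, inner_sub_right, real_inner_self_eq_norm_sq]
    rw [hiv] at hz
    have hlam' : (0:ℝ) < 2 * lam := by linarith
    -- from hz and hcv derive the linear inequality, dividing by t
    have h3 : g y₁ * (2 * lam) + ‖u‖ ^ 2
        ≤ ((1 - t) * g y₁ + t * g a) * (2 * lam)
          + (‖u‖ ^ 2 + 2 * (t * ((inner ℝ u v : ℝ) - ‖u‖ ^ 2)) + t ^ 2 * ‖a - y₁‖ ^ 2) := by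
      have := hz.trans (by nlinarith : g ((1 - t) • y₁ + t • a)
          + (‖u‖ ^ 2 + 2 * (t * ((inner ℝ u v : ℝ) - ‖u‖ ^ 2)) + t ^ 2 * ‖a - y₁‖ ^ 2) / (2 * lam)
          ≤ ((1 - t) * g y₁ + t * g a)
          + (‖u‖ ^ 2 + 2 * (t * ((inner ℝ u v : ℝ) - ‖u‖ ^ 2)) + t ^ 2 * ‖a - y₁‖ ^ 2) / (2 * lam))
      calc g y₁ * (2 * lam) + ‖u‖ ^ 2
          = (g y₁ + ‖u‖ ^ 2 / (2 * lam)) * (2 * lam) := by field_simp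
        _ ≤ (((1 - t) * g y₁ + t * g a)
            + (‖u‖ ^ 2 + 2 * (t * ((inner ℝ u v : ℝ) - ‖u‖ ^ 2)) + t ^ 2 * ‖a - y₁‖ ^ 2)
              / (2 * lam)) * (2 * lam) := by
            exact mul_le_mul_of_nonneg_right this hlam'.le
        _ = ((1 - t) * g y₁ + t * g a) * (2 * lam)
            + (‖u‖ ^ 2 + 2 * (t * ((inner ℝ u v : ℝ) - ‖u‖ ^ 2)) + t ^ 2 * ‖a - y₁‖ ^ 2) := by
            field_simp
    -- h3 simplifies to 0 ≤ 2t*(lam*(g a - g y₁) + (⟪u,v⟫ - ‖u‖²) + t*‖a-y₁‖²/2)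
    have h4 : 0 ≤ 2 * t * (lam * (g a - g y₁) + ((inner ℝ u v : ℝ) - ‖u‖ ^ 2)
        + t * (‖a - y₁‖ ^ 2 / 2)) := by nlinarith
    nlinarith
  -- (2) subgradient at y₀ applied to y₁
  have key2 : g y₀ + (inner ℝ s u : ℝ) ≤ g y₁ := by
    have := hs y₁
    rwa [hu]
  -- (3) completed square
  have key3 : 0 ≤ ‖u‖ ^ 2 + 2 * (lam * (inner ℝ u s : ℝ)) + lam ^ 2 * ‖s‖ ^ 2 := by
    have := norm_add_sq_real u (lam • s)
    have h2 : ‖u + lam • s‖ ^ 2 = ‖u‖ ^ 2 + 2 * (lam * (inner ℝ u s : ℝ)) + lam ^ 2 * ‖s‖ ^ 2 := by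
      rw [this, real_inner_smul_right, norm_smul, Real.norm_eq_abs, abs_of_pos hlam]
      ring
    nlinarith [sq_nonneg ‖u + lam • s‖]
  have hsymm : (inner ℝ s u : ℝ) = (inner ℝ u s : ℝ) := real_inner_comm u s
  have hexp : ‖y₁ - a‖ ^ 2 = ‖u‖ ^ 2 - 2 * (inner ℝ u v : ℝ) + ‖v‖ ^ 2 := by
    have h1 : y₁ - a = u - v := by rw [hu, hv]; abel
    rw [h1, norm_sub_sq_real]
  have hv0 : ‖y₀ - a‖ ^ 2 = ‖v‖ ^ 2 := by
    rw [hv, ← norm_neg]; congr 1; abel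
  rw [hexp, hv0]
  nlinarith [key1, key2, key3]
end

section
/- If a convex C¹ function f: ℝ^d → ℝ has L-Lipschitz gradient, then ∇f is co-coercive: ⟨∇f(x) − ∇f(y), x − y⟩ ≥ (1/L)‖∇f(x) − ∇f(y)‖² for all x, y. -/
open Set InnerProductSpace

section aux

variable {E : Type*} [NormedAddCommGroup E] [InnerProductSpace ℝ E] [CompleteSpace E]

local notation "⟪" x ", " y "⟫" => @inner ℝ _ _ x y

lemma line_hasDerivAt {f : E → ℝ} {φ : E → E} (hgrad : ∀ p, HasGradientAt f (φ p) p)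
    (x v : E) (t : ℝ) :
    HasDerivAt (fun s : ℝ => f (x + s • v)) ⟪φ (x + t • v), v⟫ t := by
  have hc : HasDerivAt (fun s : ℝ => x + s • v) v t := by
    simpa using ((hasDerivAt_id t).smul_const v).const_add x
  have hf : HasFDerivAt f (toDual ℝ E (φ (x + t • v))) (x + t • v) :=
    hasGradientAt_iff_hasFDerivAt.mp (hgrad (x + t • v))
  have h' := hf.comp_hasDerivAt t hc
  simp only [toDual_apply_apply] at h'
  exact h'

lemma convex_first_order {f : E → ℝ} {φ : E → E} (hconv : ConvexOn ℝ univ f)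
    (hgrad : ∀ p, HasGradientAt f (φ p) p) (x y : E) :
    ⟪φ x, y - x⟫ ≤ f y - f x := by
  set v := y - x with hv
  have hg : ConvexOn ℝ univ (f ∘ (AffineMap.lineMap x y : ℝ →ᵃ[ℝ] E)) := by
    have := hconv.comp_affineMap (AffineMap.lineMap x y : ℝ →ᵃ[ℝ] E)
    simpa using this
  have hd : HasDerivAt (f ∘ (AffineMap.lineMap x y : ℝ →ᵃ[ℝ] E)) ⟪φ x, v⟫ 0 := by
    have := line_hasDerivAt hgrad x v 0
    simp only [zero_smul, add_zero] at this
    have hfe : (f ∘ (AffineMap.lineMap x y : ℝ →ᵃ[ℝ] E)) = fun s : ℝ => f (x + s • v) := by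
      funext s
      simp only [Function.comp_apply, AffineMap.lineMap_apply, vadd_eq_add, vsub_eq_sub, hv]
      congr 1
      module
    rw [hfe]
    exact this
  have hs := hg.le_slope_of_hasDerivAt (mem_univ (0:ℝ)) (mem_univ (1:ℝ)) one_pos hd
  rw [slope_def_field] at hs
  simpa [AffineMap.lineMap_apply] using hs

lemma descent_lemma {f : E → ℝ} {φ : E → E} {L : ℝ} (hL : 0 < L)
    (hgrad : ∀ p, HasGradientAt f (φ p) p)
    (hlip : ∀ p q : E, ‖φ p - φ q‖ ≤ L * ‖p - q‖) (x y : E) :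
    f y ≤ f x + ⟪φ x, y - x⟫ + L / 2 * ‖y - x‖ ^ 2 := by
  set v := y - x with hv
  set h : ℝ → ℝ := fun t => f (x + t • v) - t * ⟪φ x, v⟫ - L * t ^ 2 * ‖v‖ ^ 2 / 2 with hh
  have hder : ∀ t : ℝ, HasDerivAt h (⟪φ (x + t • v), v⟫ - ⟪φ x, v⟫ - L * t * ‖v‖ ^ 2) t := by
    intro t
    have h1 := line_hasDerivAt hgrad x v t
    have h2 : HasDerivAt (fun t : ℝ => t * ⟪φ x, v⟫) ⟪φ x, v⟫ t := by
      simpa using (hasDerivAt_id t).mul_const ⟪φ x, v⟫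
    have h3 : HasDerivAt (fun t : ℝ => L * t ^ 2 * ‖v‖ ^ 2 / 2) (L * t * ‖v‖ ^ 2) t := by
      have := ((hasDerivAt_pow 2 t).const_mul L).mul_const (‖v‖ ^ 2 / 2)
      convert this using 1
      · rfl
      · rfl
      · ext s; ring
      · simp only [Nat.cast_ofNat, show (2:ℕ) - 1 = 1 from rfl, pow_one]; ring
    have := (h1.sub h2).sub h3
    exact this
  have hanti : AntitoneOn h (Icc (0:ℝ) 1) := by
    apply antitoneOn_of_deriv_nonpos (convex_Icc 0 1)
    · exact fun t _ => (hder t).differentiableAt.continuousAt.continuousWithinAt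
    · exact fun t _ => ((hder t).differentiableAt).differentiableWithinAt
    · intro t ht
      rw [interior_Icc] at ht
      rw [(hder t).deriv]
      have hb : ⟪φ (x + t • v) - φ x, v⟫ ≤ L * t * ‖v‖ ^ 2 := by
        calc ⟪φ (x + t • v) - φ x, v⟫ ≤ ‖φ (x + t • v) - φ x‖ * ‖v‖ :=
              real_inner_le_norm _ _
          _ ≤ (L * ‖(x + t • v) - x‖) * ‖v‖ := by
              gcongr
              exact hlip _ _
          _ = L * t * ‖v‖ ^ 2 := by
              have : ‖(x + t • v) - x‖ = t * ‖v‖ := by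
                simp [norm_smul, abs_of_pos ht.1]
              rw [this]; ring
      have heq : ⟪φ (x + t • v), v⟫ - ⟪φ x, v⟫ = ⟪φ (x + t • v) - φ x, v⟫ :=
        (inner_sub_left _ _ _).symm
      linarith
  have h10 : h 1 ≤ h 0 := hanti (by constructor <;> norm_num) (by constructor <;> norm_num)
    zero_le_one
  have h0 : h 0 = f x := by simp [hh]
  have h1 : h 1 = f y - ⟪φ x, v⟫ - L * ‖v‖ ^ 2 / 2 := by
    simp [hh, hv]
  rw [h0, h1] at h10
  linarith

lemma grad_sub_lin {f : E → ℝ} {φ : E → E} (hgrad : ∀ p, HasGradientAt f (φ p) p)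
    (a z : E) : HasGradientAt (fun w => f w - ⟪a, w⟫) (φ z - a) z := by
  have h1 : HasFDerivAt f (toDual ℝ E (φ z)) z := hasGradientAt_iff_hasFDerivAt.mp (hgrad z)
  have h2 : HasFDerivAt (fun w => ⟪a, w⟫) (toDual ℝ E a) z := (toDual ℝ E a).hasFDerivAt
  rw [hasGradientAt_iff_hasFDerivAt, map_sub]
  exact h1.sub h2

lemma convexOn_sub_inner {f : E → ℝ} (hconv : ConvexOn ℝ univ f) (a : E) :
    ConvexOn ℝ univ (fun w => f w - ⟪a, w⟫) := by
  refine ⟨convex_univ, ?_⟩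
  intro p hp q hq s t hs ht hst
  have hf := hconv.2 hp hq hs ht hst
  simp only [smul_eq_mul, inner_add_right, real_inner_smul_right] at *
  linarith

lemma key_ineq {f : E → ℝ} {φ : E → E} {L : ℝ} (hL : 0 < L)
    (hconv : ConvexOn ℝ univ f)
    (hgrad : ∀ p, HasGradientAt f (φ p) p)
    (hlip : ∀ p q : E, ‖φ p - φ q‖ ≤ L * ‖p - q‖) (x y : E) :
    1 / (2 * L) * ‖φ x - φ y‖ ^ 2 ≤ f x - f y - ⟪φ y, x - y⟫ := by
  set g : E → ℝ := fun w => f w - ⟪φ y, w⟫ with hg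
  set ψ : E → E := fun w => φ w - φ y with hψ
  have hgg : ∀ p, HasGradientAt g (ψ p) p := fun p => grad_sub_lin hgrad (φ y) p
  have hgconv : ConvexOn ℝ univ g := convexOn_sub_inner hconv (φ y)
  have hglip : ∀ p q : E, ‖ψ p - ψ q‖ ≤ L * ‖p - q‖ := by
    intro p q
    simpa [hψ, sub_sub_sub_cancel_right] using hlip p q
  have hmin : ∀ z : E, g y ≤ g z := by
    intro z
    have := convex_first_order hgconv hgg y z
    have hz : ψ y = 0 := by simp [hψ]
    rw [hz] at this
    simp only [inner_zero_left] at this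
    linarith
  set z := x - (1 / L) • ψ x with hzdef
  have hzx : z - x = -((1 / L) • ψ x) := by
    rw [hzdef]; abel
  have hdesc := descent_lemma hL hgg hglip x z
  have h1 : ⟪ψ x, z - x⟫ = -(1 / L) * ‖ψ x‖ ^ 2 := by
    rw [hzx, inner_neg_right, real_inner_smul_right, real_inner_self_eq_norm_sq]
    ring
  have h2 : ‖z - x‖ ^ 2 = (1 / L) ^ 2 * ‖ψ x‖ ^ 2 := by
    rw [hzx, norm_neg, norm_smul, mul_pow, Real.norm_eq_abs,
      abs_of_pos (by positivity : (0:ℝ) < 1 / L)]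
  have hgoal : 1 / (2 * L) * ‖ψ x‖ ^ 2 ≤ g x - g y := by
    have hz := hmin z
    rw [h1, h2] at hdesc
    have htermeq : L / 2 * ((1 / L) ^ 2 * ‖ψ x‖ ^ 2) = 1 / (2 * L) * ‖ψ x‖ ^ 2 := by
      field_simp
    have hhalf : (1 / L) * ‖ψ x‖ ^ 2 = 1 / (2 * L) * ‖ψ x‖ ^ 2 + 1 / (2 * L) * ‖ψ x‖ ^ 2 := by
      have hLne : L ≠ 0 := hL.ne'
      field_simp
      ring
    rw [htermeq] at hdesc
    set A := g x; set B := g y; set C := g z; set s := ‖ψ x‖ ^ 2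
    clear_value A B C s
    have e1 : -(1 / L) * s = -(1 / L * s) := by ring
    rw [e1] at hdesc
    linarith [hz, hdesc, hhalf]
  have hgxy : g x - g y = f x - f y - ⟪φ y, x - y⟫ := by
    simp only [hg, inner_sub_right]
    ring
  rw [hgxy] at hgoal
  simpa [hψ] using hgoal

end aux

/-- Baillon–Haddad: a convex C¹ function with L-Lipschitz gradient has a
co-coercive gradient. -/
theorem stmt_11 (d : ℕ) (f : EuclideanSpace ℝ (Fin d) → ℝ) (L : ℝ) (hL : 0 < L)
    (hconv : ConvexOn ℝ Set.univ f)
    (f' : EuclideanSpace ℝ (Fin d) → EuclideanSpace ℝ (Fin d))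
    (hgrad : ∀ x, HasGradientAt f (f' x) x)
    (hlip : ∀ x y : EuclideanSpace ℝ (Fin d), ‖f' x - f' y‖ ≤ L * ‖x - y‖) :
    ∀ x y : EuclideanSpace ℝ (Fin d),
      (1 / L) * ‖f' x - f' y‖ ^ 2 ≤ (inner ℝ (f' x - f' y) (x - y) : ℝ) := by
  intro x y
  have h1 := key_ineq hL hconv hgrad hlip x y
  have h2 := key_ineq hL hconv hgrad hlip y x
  have hn : ‖f' y - f' x‖ = ‖f' x - f' y‖ := norm_sub_rev _ _
  rw [hn] at h2
  have hyx : (inner ℝ (f' x) (y - x) : ℝ) = -(inner ℝ (f' x) (x - y) : ℝ) := by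
    rw [← inner_neg_right]; congr 1; abel
  rw [hyx] at h2
  have hsum : (inner ℝ (f' x - f' y) (x - y) : ℝ)
      = (inner ℝ (f' x) (x - y) : ℝ) - (inner ℝ (f' y) (x - y) : ℝ) := inner_sub_left _ _ _
  have hq : 1 / L * ‖f' x - f' y‖ ^ 2
      = 1 / (2 * L) * ‖f' x - f' y‖ ^ 2 + 1 / (2 * L) * ‖f' x - f' y‖ ^ 2 := by
    have hLne : L ≠ 0 := hL.ne'
    field_simp
    ring
  rw [hsum]
  linarith [h1, h2, hq]
end
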